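/- A lattice equipped with the order-algebraic convexity (convex sets are the order-convex sublattices) is a convex geometry if and only if it is a chain. -/
import Mathlib


/-- The order-algebraic convexity on a lattice: order-convex sublattices. -/
def LatOrderAlgConvex {L : Type*} [Lattice L] (T : Set L) : Prop :=
  (∀ ⦃x⦄, x ∈ T → ∀ ⦃y⦄, y ∈ T → x ⊔ y ∈ T ∧ x ⊓ y ∈ T) ∧
  ∀ ⦃x z : L⦄, x ∈ T → z ∈ T → ∀ ⦃y : L⦄, x ≤ y → y ≤ z → y ∈ T

def latOrderAlgHull {L : Type*} [Lattice L] (A : Set L) : Set L :=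
  ⋂₀ {T | LatOrderAlgConvex T ∧ A ⊆ T}

/-- A lattice with the order-algebraic convexity is a convex geometry iff it is a chain. -/
theorem latOrderAlgConvexity_convexGeometry_iff_chain {L : Type*} [Lattice L] :
    (∀ K : Set L, LatOrderAlgConvex K → ∀ x y : L, x ≠ y → x ∉ K → y ∉ K →
      y ∈ latOrderAlgHull (K ∪ {x}) → x ∉ latOrderAlgHull (K ∪ {y})) ↔
    ∀ a b : L, a ≤ b ∨ b ≤ a := by
  constructor
  · intro h a b
    by_contra hc
    push_neg at hc
    obtain ⟨hab, hba⟩ := hc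
    set K : Set L := Set.Icc (a ⊓ b) a with hKdef
    have hK : LatOrderAlgConvex K := by
      constructor
      · intro x hx y hy
        refine ⟨⟨hx.1.trans le_sup_left, sup_le hx.2 hy.2⟩,
          ⟨le_inf hx.1 hy.1, inf_le_left.trans hx.2⟩⟩
      · intro x z hx hz y hxy hyz
        exact ⟨hx.1.trans hxy, hyz.trans hz.2⟩
    have haK : a ∈ K := ⟨inf_le_left, le_refl a⟩
    have hmK : a ⊓ b ∈ K := ⟨le_refl _, inf_le_left⟩
    have hbK : b ∉ K := fun hb => hba hb.2
    have hjK : a ⊔ b ∉ K := fun hj => hba (le_sup_right.trans hj.2)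
    have hne : b ≠ a ⊔ b := fun h' => hab (h' ▸ le_sup_left)
    have mem1 : a ⊔ b ∈ latOrderAlgHull (K ∪ {b}) := by
      intro T hT
      obtain ⟨hTc, hTs⟩ := hT
      exact (hTc.1 (hTs (Or.inl haK)) (hTs (Or.inr rfl))).1
    have mem2 : b ∈ latOrderAlgHull (K ∪ {a ⊔ b}) := by
      intro T hT
      obtain ⟨hTc, hTs⟩ := hT
      exact hTc.2 (hTs (Or.inl hmK)) (hTs (Or.inr rfl)) inf_le_right le_sup_right
    exact h K hK b (a ⊔ b) hne hbK hjK mem1 mem2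
  · intro hchain K hK x y hxy hxK hyK hyHull hxHull
    have key : ∀ p : L, ∀ w ∈ latOrderAlgHull (K ∪ {p}),
        ∃ u ∈ K ∪ {p}, ∃ v ∈ K ∪ {p}, u ≤ w ∧ w ≤ v := by
      intro p w hw
      have hH : LatOrderAlgConvex {w | ∃ u ∈ K ∪ {p}, ∃ v ∈ K ∪ {p}, u ≤ w ∧ w ≤ v} := by
        constructor
        · rintro s ⟨u1, hu1, v1, hv1, hs1, hs2⟩ t ⟨u2, hu2, v2, hv2, ht1, ht2⟩
          constructor
          · rcases hchain s t with hst | hts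
            · exact ⟨u2, hu2, v2, hv2, by rw [sup_eq_right.2 hst]; exact ⟨ht1, ht2⟩⟩
            · exact ⟨u1, hu1, v1, hv1, by rw [sup_eq_left.2 hts]; exact ⟨hs1, hs2⟩⟩
          · rcases hchain s t with hst | hts
            · exact ⟨u1, hu1, v1, hv1, by rw [inf_eq_left.2 hst]; exact ⟨hs1, hs2⟩⟩
            · exact ⟨u2, hu2, v2, hv2, by rw [inf_eq_right.2 hts]; exact ⟨ht1, ht2⟩⟩
        · rintro s z ⟨u1, hu1, v1, hv1, hs1, hs2⟩ ⟨u2, hu2, v2, hv2, hz1, hz2⟩ w hsw hwz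
          exact ⟨u1, hu1, v2, hv2, hs1.trans hsw, hwz.trans hz2⟩
      have hsub : K ∪ {p} ⊆ {w | ∃ u ∈ K ∪ {p}, ∃ v ∈ K ∪ {p}, u ≤ w ∧ w ≤ v} :=
        fun q hq => ⟨q, hq, q, hq, le_refl q, le_refl q⟩
      exact hw _ ⟨hH, hsub⟩
    obtain ⟨u, hu, v, hv, huy, hyv⟩ := key x y hyHull
    obtain ⟨u', hu', v', hv', hux, hxv⟩ := key y x hxHull
    rcases hu with hu | hu
    · rcases hv with hv | hv
      · exact hyK (hK.2 hu hv huy hyv)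
      · -- v = x, so y ≤ x
        rw [Set.mem_singleton_iff] at hv
        subst hv
        rcases hv' with hv' | hv'
        · exact hxK (hK.2 hu hv' (huy.trans hyv) hxv)
        · rw [Set.mem_singleton_iff] at hv'
          subst hv'
          exact hxy (le_antisymm hxv hyv)
    · -- u = x, so x ≤ y
      rw [Set.mem_singleton_iff] at hu
      subst hu
      rcases hv with hv | hv
      · rcases hu' with hu' | hu'
        · exact hxK (hK.2 hu' hv hux (huy.trans hyv))
        · rw [Set.mem_singleton_iff] at hu'
          subst hu'
          exact hxy (le_antisymm huy hux)
      · rw [Set.mem_singleton_iff] at hv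
        subst hv
        exact hxy (le_antisymm huy hyv)
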